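/- Let S be a real symmetric p×p matrix with orthogonal eigendecomposition S = M diag(φ₁, …, φ_p) Mᵀ, where M is an orthogonal matrix whose columns are eigenvectors of S and φ₁, …, φ_p are the corresponding eigenvalues. Let λ > 0 and define Θ̂ = M diag(φ̂₁, …, φ̂_p) Mᵀ with φ̂_i = 2/(φ_i + √(φ_i² + 8λ)). Then Θ̂ is symmetric positive definite, and for every symmetric positive definite p×p matrix Θ with Θ ≠ Θ̂ one has −log det Θ̂ + tr(S Θ̂) + λ‖Θ̂‖_F² < −log det Θ + tr(S Θ) + λ‖Θ‖_F²; i.e., Θ̂ is the unique minimizer of the ridge-penalized negative log-likelihood over positive definite matrices. -/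

import Mathlib

open scoped Matrix
open Finset

private lemma trace_logdet {p : ℕ} {C : Matrix (Fin p) (Fin p) ℝ} (hC : C.PosDef) :
    Real.log C.det + p ≤ C.trace := by
  have hdet : C.det = ∏ i, hC.1.eigenvalues i := by
    simpa using hC.1.det_eq_prod_eigenvalues
  have htr : C.trace = ∑ i, hC.1.eigenvalues i := by
    nth_rewrite 1 [hC.1.spectral_theorem]
    rw [Unitary.conjStarAlgAut_apply]
    rw [Matrix.trace_mul_comm, ← Matrix.mul_assoc, Unitary.coe_star_mul_self, Matrix.one_mul]
    simp [Matrix.trace_diagonal]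
  have hpos := hC.eigenvalues_pos
  rw [hdet, htr, Real.log_prod (fun i _ => (hpos i).ne')]
  have h1 : ∑ i : Fin p, (Real.log (hC.1.eigenvalues i) + 1) ≤ ∑ i, hC.1.eigenvalues i :=
    Finset.sum_le_sum fun i _ => by linarith [Real.log_le_sub_one_of_pos (hpos i)]
  calc (∑ i : Fin p, Real.log (hC.1.eigenvalues i)) + p
      = ∑ i : Fin p, (Real.log (hC.1.eigenvalues i) + 1) := by
        rw [Finset.sum_add_distrib]; simp
    _ ≤ _ := h1

private lemma posDef_conj {p : ℕ} {A B C : Matrix (Fin p) (Fin p) ℝ} (hA : A.PosDef)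
    (hCB : C * B = 1) : (Bᵀ * A * B).PosDef := by
  rw [Matrix.posDef_iff_dotProduct_mulVec]
  constructor
  · have hAs : Aᵀ = A := by
      have := hA.isHermitian
      simpa [Matrix.IsHermitian] using this
    show (Bᵀ * A * B)ᴴ = _
    simp [Matrix.conjTranspose_mul, Matrix.mul_assoc, hAs]
  · intro x hx
    have hBx : B *ᵥ x ≠ 0 := by
      intro h
      apply hx
      have : C *ᵥ (B *ᵥ x) = x := by
        rw [Matrix.mulVec_mulVec, hCB, Matrix.one_mulVec]
      rw [h, Matrix.mulVec_zero] at this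
      exact this.symm
    have h2 := hA.dotProduct_mulVec_pos hBx
    have key : star x ⬝ᵥ ((Bᵀ * A * B) *ᵥ x) = star (B *ᵥ x) ⬝ᵥ (A *ᵥ (B *ᵥ x)) := by
      simp only [star_trivial, ← Matrix.mulVec_mulVec]
      rw [Matrix.dotProduct_mulVec x Bᵀ, Matrix.vecMul_transpose]
    rw [key]
    exact h2

private lemma trace_mul_symm {p : ℕ} (A B : Matrix (Fin p) (Fin p) ℝ) (hB : Bᵀ = B) :
    (A * B).trace = ∑ i, ∑ j, A i j * B i j := by
  rw [Matrix.trace]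
  simp only [Matrix.diag, Matrix.mul_apply]
  refine Finset.sum_congr rfl fun i _ => Finset.sum_congr rfl fun j _ => ?_
  rw [show B j i = Bᵀ i j from rfl, hB]

private lemma conj_mul_conj {p : ℕ} {M : Matrix (Fin p) (Fin p) ℝ} (hMt : Mᵀ * M = 1)
    (a b : Fin p → ℝ) :
    (M * Matrix.diagonal a * Mᵀ) * (M * Matrix.diagonal b * Mᵀ)
      = M * Matrix.diagonal (fun i => a i * b i) * Mᵀ := by
  have h : Matrix.diagonal a * Matrix.diagonal b = Matrix.diagonal (fun i => a i * b i) := by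
    rw [Matrix.diagonal_mul_diagonal]
  calc (M * Matrix.diagonal a * Mᵀ) * (M * Matrix.diagonal b * Mᵀ)
      = M * (Matrix.diagonal a * ((Mᵀ * M) * (Matrix.diagonal b * Mᵀ))) := by
        simp only [Matrix.mul_assoc]
    _ = M * Matrix.diagonal (fun i => a i * b i) * Mᵀ := by
        rw [hMt, Matrix.one_mul, ← Matrix.mul_assoc (Matrix.diagonal a), h,
          ← Matrix.mul_assoc]

private lemma det_conj {p : ℕ} {M : Matrix (Fin p) (Fin p) ℝ} (hM : M * Mᵀ = 1)
    (a : Fin p → ℝ) : (M * Matrix.diagonal a * Mᵀ).det = ∏ i, a i := by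
  have hdM : M.det * M.det = 1 := by
    have := congrArg Matrix.det hM
    rwa [Matrix.det_mul, Matrix.det_transpose, Matrix.det_one] at this
  rw [Matrix.det_mul, Matrix.det_mul, Matrix.det_transpose, Matrix.det_diagonal]
  linear_combination (∏ i, a i) * hdM

theorem stmt3 {p : ℕ} (S M : Matrix (Fin p) (Fin p) ℝ) (φ : Fin p → ℝ)
    (hM : M * Mᵀ = 1) (hS : S = M * Matrix.diagonal φ * Mᵀ)
    (lam : ℝ) (hlam : 0 < lam) (Θhat : Matrix (Fin p) (Fin p) ℝ)
    (hΘhat : Θhat =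
      M * Matrix.diagonal (fun i => 2 / (φ i + Real.sqrt ((φ i) ^ 2 + 8 * lam))) * Mᵀ) :
    Θhat.PosDef ∧
      ∀ Θ : Matrix (Fin p) (Fin p) ℝ, Θ.PosDef → Θ ≠ Θhat →
        -Real.log Θhat.det + (S * Θhat).trace + lam * ∑ i, ∑ j, (Θhat i j) ^ 2 <
          -Real.log Θ.det + (S * Θ).trace + lam * ∑ i, ∑ j, (Θ i j) ^ 2 := by
  have hMt : Mᵀ * M = 1 := mul_eq_one_comm.mp hM
  set d : Fin p → ℝ := fun i => 2 / (φ i + Real.sqrt ((φ i) ^ 2 + 8 * lam)) with hd_def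
  have hTd : Θhat = M * Matrix.diagonal d * Mᵀ := hΘhat
  -- scalar facts about d
  have hsum : ∀ i, 0 < φ i + Real.sqrt ((φ i) ^ 2 + 8 * lam) := by
    intro i
    have habs : |φ i| < Real.sqrt ((φ i) ^ 2 + 8 * lam) := by
      rw [show |φ i| = Real.sqrt ((φ i) ^ 2) by rw [Real.sqrt_sq_eq_abs]]
      exact Real.sqrt_lt_sqrt (by positivity) (by linarith)
    have := neg_abs_le (φ i)
    linarith
  have hd : ∀ i, 0 < d i := fun i => div_pos two_pos (hsum i)
  have hde : ∀ i, d i * φ i + 2 * lam * (d i) ^ 2 = 1 := by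
    intro i
    have hs2 : Real.sqrt ((φ i) ^ 2 + 8 * lam) ^ 2 = (φ i) ^ 2 + 8 * lam :=
      Real.sq_sqrt (by positivity)
    have hne : φ i + Real.sqrt ((φ i) ^ 2 + 8 * lam) ≠ 0 := (hsum i).ne'
    rw [hd_def]
    field_simp
    linear_combination (-1 : ℝ) * hs2
  have hdinv : ∀ i, (d i)⁻¹ = φ i + 2 * lam * d i := by
    intro i
    have h1 : d i * (φ i + 2 * lam * d i) = 1 := by linear_combination hde i
    exact inv_eq_of_mul_eq_one_right h1
  -- the matrix K = Θhat⁻¹ = S + 2λ Θhat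
  set K := M * Matrix.diagonal (fun i => (d i)⁻¹) * Mᵀ with hK
  have hdiag_inv : Matrix.diagonal (fun i => (d i)⁻¹)
      = Matrix.diagonal φ + (2 * lam) • Matrix.diagonal d := by
    ext i j
    rcases eq_or_ne i j with rfl | hij
    · simp [Matrix.diagonal_apply_eq, Matrix.add_apply, Matrix.smul_apply, smul_eq_mul,
        hdinv i]
    · simp [Matrix.diagonal_apply_ne _ hij, Matrix.add_apply, Matrix.smul_apply]
  have hKS : K = S + (2 * lam) • Θhat := by
    rw [hK, hdiag_inv, hS, hTd, Matrix.mul_add, Matrix.add_mul, Matrix.mul_smul,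
      Matrix.smul_mul]
  -- Θhat is positive definite
  have hΘhatPD : Θhat.PosDef := by
    have h := posDef_conj (Matrix.PosDef.diagonal hd) hM
    rw [Matrix.transpose_transpose] at h
    rwa [hTd]
  have hΘhatT : Θhatᵀ = Θhat := by
    have := hΘhatPD.isHermitian
    simpa [Matrix.IsHermitian] using this
  have hdetΘhat : Θhat.det = ∏ i, d i := by rw [hTd]; exact det_conj hM d
  refine ⟨hΘhatPD, ?_⟩
  intro Θ hΘ hne
  have hΘT : Θᵀ = Θ := by
    have := hΘ.isHermitian
    simpa [Matrix.IsHermitian] using this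
  -- conjugation matrix B
  set E := Matrix.diagonal (fun i => (Real.sqrt (d i))⁻¹) with hE
  set B := M * E with hB
  have hsd : ∀ i, Real.sqrt (d i) ≠ 0 := fun i => (Real.sqrt_pos.mpr (hd i)).ne'
  have hCB : (Matrix.diagonal (fun i => Real.sqrt (d i)) * Mᵀ) * B = 1 := by
    rw [hB, hE, Matrix.mul_assoc, ← Matrix.mul_assoc Mᵀ M, hMt, Matrix.one_mul,
      Matrix.diagonal_mul_diagonal]
    have h : (fun i => Real.sqrt (d i) * (Real.sqrt (d i))⁻¹) = fun _ => (1 : ℝ) :=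
      funext fun i => mul_inv_cancel₀ (hsd i)
    rw [h, Matrix.diagonal_one]
  set C := Bᵀ * Θ * B with hC
  have hCPD : C.PosDef := posDef_conj hΘ hCB
  have hBBt : B * Bᵀ = K := by
    rw [hB, hE, Matrix.transpose_mul, Matrix.diagonal_transpose,
      show M * Matrix.diagonal (fun i => (Real.sqrt (d i))⁻¹) *
          (Matrix.diagonal (fun i => (Real.sqrt (d i))⁻¹) * Mᵀ)
        = M * (Matrix.diagonal (fun i => (Real.sqrt (d i))⁻¹) *
            Matrix.diagonal (fun i => (Real.sqrt (d i))⁻¹)) * Mᵀ from by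
          simp only [Matrix.mul_assoc],
      Matrix.diagonal_mul_diagonal]
    have h : (fun i => (Real.sqrt (d i))⁻¹ * (Real.sqrt (d i))⁻¹) = fun i => (d i)⁻¹ :=
      funext fun i => by rw [← mul_inv, Real.mul_self_sqrt (hd i).le]
    rw [h, hK]
  have htrC : C.trace = (K * Θ).trace := by
    rw [hC, Matrix.trace_mul_cycle, hBBt]
  have hdp : 0 < ∏ i, d i := Finset.prod_pos fun i _ => hd i
  have hdetC : C.det = Θ.det * (∏ i, d i)⁻¹ := by
    have hdM : M.det * M.det = 1 := by
      have := congrArg Matrix.det hM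
      rwa [Matrix.det_mul, Matrix.det_transpose, Matrix.det_one] at this
    have hP2 : (∏ i, (Real.sqrt (d i))⁻¹) * (∏ i, (Real.sqrt (d i))⁻¹) = (∏ i, d i)⁻¹ := by
      rw [← Finset.prod_mul_distrib, ← Finset.prod_inv_distrib]
      exact Finset.prod_congr rfl fun i _ => by
        rw [← mul_inv, Real.mul_self_sqrt (hd i).le]
    have hdB2 : B.det * B.det = (∏ i, d i)⁻¹ := by
      rw [hB, Matrix.det_mul, hE, Matrix.det_diagonal]
      linear_combination ((∏ i, (Real.sqrt (d i))⁻¹) * (∏ i, (Real.sqrt (d i))⁻¹)) * hdM + hP2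
    rw [hC, Matrix.det_mul, Matrix.det_mul, Matrix.det_transpose]
    linear_combination Θ.det * hdB2
  -- the key log-det inequality
  have hkey : Real.log Θ.det + p ≤ Real.log Θhat.det + (K * Θ).trace := by
    have h := trace_logdet hCPD
    rw [htrC, hdetC] at h
    have hlog : Real.log (Θ.det * (∏ i, d i)⁻¹)
        = Real.log Θ.det - Real.log Θhat.det := by
      rw [Real.log_mul hΘ.det_pos.ne' (inv_ne_zero hdp.ne'), Real.log_inv, hdetΘhat]
      ring
    rw [hlog] at h
    linarith
  -- trace identities
  have hQh : (Θhat * Θhat).trace = ∑ i, ∑ j, (Θhat i j) ^ 2 := by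
    rw [trace_mul_symm _ _ hΘhatT]
    exact Finset.sum_congr rfl fun i _ => Finset.sum_congr rfl fun j _ => (pow_two _).symm
  have hT : (Θhat * Θ).trace = ∑ i, ∑ j, Θhat i j * Θ i j := trace_mul_symm _ _ hΘT
  have hKΘ : (K * Θ).trace = (S * Θ).trace + 2 * lam * ∑ i, ∑ j, Θhat i j * Θ i j := by
    rw [hKS, Matrix.add_mul, Matrix.trace_add, Matrix.smul_mul, Matrix.trace_smul, hT]
    simp only [smul_eq_mul]
  have hKΘhat : (S * Θhat).trace + 2 * lam * ∑ i, ∑ j, (Θhat i j) ^ 2 = p := by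
    have h1 : K * Θhat = 1 := by
      rw [hK, hTd, conj_mul_conj hMt]
      have h : (fun i => (d i)⁻¹ * d i) = fun _ => (1 : ℝ) :=
        funext fun i => inv_mul_cancel₀ (hd i).ne'
      rw [h, Matrix.diagonal_one, Matrix.mul_one, hM]
    have h2 : (K * Θhat).trace = (S * Θhat).trace + 2 * lam * ∑ i, ∑ j, (Θhat i j) ^ 2 := by
      rw [hKS, Matrix.add_mul, Matrix.trace_add, Matrix.smul_mul, Matrix.trace_smul, hQh]
      simp only [smul_eq_mul]
    rw [← h2, h1, Matrix.trace_one]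
    simp
  -- positivity of the squared Frobenius distance
  have hP : 0 < ∑ i, ∑ j, (Θ i j - Θhat i j) ^ 2 := by
    obtain ⟨i, j, hij⟩ : ∃ i j, Θ i j ≠ Θhat i j := by
      by_contra h
      push_neg at h
      exact hne (by ext i j; exact h i j)
    refine Finset.sum_pos' (fun i _ => Finset.sum_nonneg fun j _ => sq_nonneg _)
      ⟨i, Finset.mem_univ i, ?_⟩
    refine Finset.sum_pos' (fun j _ => sq_nonneg _) ⟨j, Finset.mem_univ j, ?_⟩
    exact sq_pos_of_ne_zero (sub_ne_zero.mpr hij)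
  have hPexp : ∑ i, ∑ j, (Θ i j - Θhat i j) ^ 2
      = (∑ i, ∑ j, (Θ i j) ^ 2) - 2 * (∑ i, ∑ j, Θhat i j * Θ i j)
        + ∑ i, ∑ j, (Θhat i j) ^ 2 := by
    have h : ∀ i j : Fin p, (Θ i j - Θhat i j) ^ 2
        = (Θ i j) ^ 2 - 2 * (Θhat i j * Θ i j) + (Θhat i j) ^ 2 := fun i j => by ring
    simp only [h, Finset.sum_add_distrib, Finset.sum_sub_distrib, ← Finset.mul_sum]
  have hlamP : 0 < lam * ((∑ i, ∑ j, (Θ i j) ^ 2) - 2 * (∑ i, ∑ j, Θhat i j * Θ i j)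
      + ∑ i, ∑ j, (Θhat i j) ^ 2) := by
    rw [← hPexp]
    exact mul_pos hlam hP
  nlinarith [hkey, hKΘ, hKΘhat, hlamP]
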